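/- arXiv:1901.09574 — 2 statements merged into one kernel-verified Lean document; each statement's English description precedes it below -/
import Mathlib

section
/- Every ideal of the Tate algebra K{X;r}, and every ideal of the integral Tate algebra K{X;r}°, admits a finite Gröbner basis. -/
open MvPowerSeries

noncomputable section

/-- A normalized discrete valuation on a field `K`, complete with respect to
the associated distance. -/
structure IsCDVField {K : Type*} [Field K] (val : K → WithTop ℤ) : Prop where
  eq_top_iff : ∀ x : K, val x = ⊤ ↔ x = 0
  map_one : val 1 = 0
  map_mul : ∀ x y : K, val (x * y) = val x + val y
  min_le_val_add : ∀ x y : K, min (val x) (val y) ≤ val (x + y)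
  surjective : ∀ m : ℤ, ∃ x : K, val x = (m : WithTop ℤ)
  complete : ∀ u : ℕ → K,
      (∀ M : ℤ, ∃ N : ℕ, ∀ p, N ≤ p → ∀ q, N ≤ q → (M : WithTop ℤ) ≤ val (u p - u q)) →
      ∃ l : K, ∀ M : ℤ, ∃ N : ℕ, ∀ p, N ≤ p → (M : WithTop ℤ) ≤ val (u p - l)

/-- A monomial order: a well-order compatible with addition. -/
structure IsMonomialOrder {M : Type*} [AddCommMonoid M] (mo : M → M → Prop) : Prop where
  refl : ∀ i, mo i i
  trans : ∀ i j k, mo i j → mo j k → mo i k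
  antisymm : ∀ i j, mo i j → mo j i → i = j
  total : ∀ i j, mo i j ∨ mo j i
  add_right : ∀ i j k, mo i j → mo (i + k) (j + k)
  wf : WellFounded fun i j => mo i j ∧ i ≠ j

variable {K : Type*} [Field K] {n : ℕ}

/-- The valuation of `K`, with values in `WithTop ℚ`. -/
def valQ (val : K → WithTop ℤ) (a : K) : WithTop ℚ :=
  WithTop.map (fun m : ℤ => (m : ℚ)) (val a)

/-- The dot product `r·i`. -/
def wt (r : Fin n → ℚ) (i : Fin n →₀ ℕ) : ℚ :=
  ∑ j, r j * (i j : ℚ)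

/-- `val_r` of the term `a·X^i`, namely `val a - r·i`. -/
def tval (val : K → WithTop ℤ) (r : Fin n → ℚ) (a : K) (i : Fin n →₀ ℕ) : WithTop ℚ :=
  valQ val a + ((-wt r i : ℚ) : WithTop ℚ)

/-- `val_r` of the coefficient term of `f` at exponent `i`. -/
def cval (val : K → WithTop ℤ) (r : Fin n → ℚ) (f : MvPowerSeries (Fin n) K)
    (i : Fin n →₀ ℕ) : WithTop ℚ :=
  tval val r (MvPowerSeries.coeff (R := K) i f) i

/-- Membership in the Tate algebra `K{X; r}`: the coefficient valuations
`val(a_i) - r·i` tend to `+∞`, i.e. for each `C` only finitely many of them are `< C`. -/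
def IsTate (val : K → WithTop ℤ) (r : Fin n → ℚ) (f : MvPowerSeries (Fin n) K) : Prop :=
  ∀ C : ℚ, {i : Fin n →₀ ℕ | cval val r f i < (C : WithTop ℚ)}.Finite

/-- The Tate algebra `K{X; r}`, as a subset of the ring of power series. -/
def TateSet (val : K → WithTop ℤ) (r : Fin n → ℚ) : Set (MvPowerSeries (Fin n) K) :=
  {f | IsTate val r f}

/-- The integral Tate algebra `K{X; r}°` (Tate series of nonnegative Gauss valuation). -/
def TateIntSet (val : K → WithTop ℤ) (r : Fin n → ℚ) : Set (MvPowerSeries (Fin n) K) :=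
  {f | IsTate val r f ∧ ∀ i, (0 : WithTop ℚ) ≤ cval val r f i}

/-- The Gauss valuation of `f` equals `v`. -/
def GaussValEq (val : K → WithTop ℤ) (r : Fin n → ℚ) (f : MvPowerSeries (Fin n) K)
    (v : ℚ) : Prop :=
  (∀ i, (v : WithTop ℚ) ≤ cval val r f i) ∧ ∃ i, cval val r f i = (v : WithTop ℚ)

/-- `J` is an ideal of the subring `A` of the power series ring. -/
structure IsIdealOf (A J : Set (MvPowerSeries (Fin n) K)) : Prop where
  subset : J ⊆ A
  zero_mem : (0 : MvPowerSeries (Fin n) K) ∈ J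
  add_mem : ∀ f ∈ J, ∀ g ∈ J, f + g ∈ J
  neg_mem : ∀ f ∈ J, -f ∈ J
  smul_mem : ∀ a ∈ A, ∀ f ∈ J, a * f ∈ J

/-- `a·X^i < b·X^j` for the term order attached to `val`, `r` and the monomial order `mo`. -/
def TermLt (val : K → WithTop ℤ) (r : Fin n → ℚ) (mo : (Fin n →₀ ℕ) → (Fin n →₀ ℕ) → Prop)
    (a : K) (i : Fin n →₀ ℕ) (b : K) (j : Fin n →₀ ℕ) : Prop :=
  tval val r b j < tval val r a i ∨ (tval val r a i = tval val r b j ∧ i ≠ j ∧ mo i j)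

/-- `a·X^i ≤ b·X^j` for the term order. -/
def TermLe (val : K → WithTop ℤ) (r : Fin n → ℚ) (mo : (Fin n →₀ ℕ) → (Fin n →₀ ℕ) → Prop)
    (a : K) (i : Fin n →₀ ℕ) (b : K) (j : Fin n →₀ ℕ) : Prop :=
  tval val r b j < tval val r a i ∨ (tval val r a i = tval val r b j ∧ mo i j)

/-- `a·X^i` is the leading term of `f`. -/
def IsLeadingTerm (val : K → WithTop ℤ) (r : Fin n → ℚ)
    (mo : (Fin n →₀ ℕ) → (Fin n →₀ ℕ) → Prop)
    (f : MvPowerSeries (Fin n) K) (a : K) (i : Fin n →₀ ℕ) : Prop :=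
  MvPowerSeries.coeff (R := K) i f = a ∧ a ≠ 0 ∧
    ∀ j, MvPowerSeries.coeff (R := K) j f ≠ 0 → j ≠ i →
      TermLt val r mo (MvPowerSeries.coeff (R := K) j f) j a i

/-- `a·X^i` divides `b·X^j` in the monoid of terms `T(r)`. -/
def TDiv (a : K) (i : Fin n →₀ ℕ) (b : K) (j : Fin n →₀ ℕ) : Prop :=
  a ≠ 0 ∧ b ≠ 0 ∧ ∃ k, j = i + k

/-- `a·X^i` divides `b·X^j` in the monoid of integral terms `T°(r)`. -/
def TIntDiv (val : K → WithTop ℤ) (r : Fin n → ℚ) (a : K) (i : Fin n →₀ ℕ)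
    (b : K) (j : Fin n →₀ ℕ) : Prop :=
  a ≠ 0 ∧ b ≠ 0 ∧ ∃ k, j = i + k ∧ (0 : WithTop ℚ) ≤ tval val r (b * a⁻¹) k

/-- `g` is a Gröbner basis of `J`, as an ideal of `K{X;r}`. -/
def IsGB (val : K → WithTop ℤ) (r : Fin n → ℚ) (mo : (Fin n →₀ ℕ) → (Fin n →₀ ℕ) → Prop)
    (J : Set (MvPowerSeries (Fin n) K)) {s : ℕ} (g : Fin s → MvPowerSeries (Fin n) K) : Prop :=
  (∀ k, g k ∈ J ∧ g k ≠ 0) ∧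
    ∀ f ∈ J, ∀ a i, IsLeadingTerm val r mo f a i →
      ∃ k b j, IsLeadingTerm val r mo (g k) b j ∧ TDiv b j a i

/-- `g` is a Gröbner basis of `J`, as an ideal of `K{X;r}°`. -/
def IsGBInt (val : K → WithTop ℤ) (r : Fin n → ℚ) (mo : (Fin n →₀ ℕ) → (Fin n →₀ ℕ) → Prop)
    (J : Set (MvPowerSeries (Fin n) K)) {s : ℕ} (g : Fin s → MvPowerSeries (Fin n) K) : Prop :=
  (∀ k, g k ∈ J ∧ g k ≠ 0) ∧
    ∀ f ∈ J, ∀ a i, IsLeadingTerm val r mo f a i →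
      ∃ k b j, IsLeadingTerm val r mo (g k) b j ∧ TIntDiv val r b j a i

/-- The set `LT(J)` of leading terms of nonzero elements of `J`. -/
def LTSet (val : K → WithTop ℤ) (r : Fin n → ℚ) (mo : (Fin n →₀ ℕ) → (Fin n →₀ ℕ) → Prop)
    (J : Set (MvPowerSeries (Fin n) K)) : Set (K × (Fin n →₀ ℕ)) :=
  {t | ∃ f ∈ J, IsLeadingTerm val r mo f t.1 t.2}

/-- Exponents of elements of `LT(J)`: the image of `LT(J)` modulo units of `K`. -/
def LTExpSet (val : K → WithTop ℤ) (r : Fin n → ℚ) (mo : (Fin n →₀ ℕ) → (Fin n →₀ ℕ) → Prop)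
    (J : Set (MvPowerSeries (Fin n) K)) : Set (Fin n →₀ ℕ) :=
  {i | ∃ a, (a, i) ∈ LTSet val r mo J}

/-- The skeleton of `LT(J)` (modulo units of `K`): minimal elements for divisibility. -/
def SkelExp (val : K → WithTop ℤ) (r : Fin n → ℚ) (mo : (Fin n →₀ ℕ) → (Fin n →₀ ℕ) → Prop)
    (J : Set (MvPowerSeries (Fin n) K)) : Set (Fin n →₀ ℕ) :=
  {i | i ∈ LTExpSet val r mo J ∧ ∀ j ∈ LTExpSet val r mo J, (∃ k, i = j + k) → j = i}

/-- The image of `LT(J)` modulo units of `K°`: pairs (exponent, valuation of the term). -/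
def LTClassSet (val : K → WithTop ℤ) (r : Fin n → ℚ) (mo : (Fin n →₀ ℕ) → (Fin n →₀ ℕ) → Prop)
    (J : Set (MvPowerSeries (Fin n) K)) : Set ((Fin n →₀ ℕ) × ℚ) :=
  {c | ∃ a, (a, c.1) ∈ LTSet val r mo J ∧ tval val r a c.1 = (c.2 : WithTop ℚ)}

/-- Divisibility of classes of integral terms modulo units of `K°`. -/
def ClassDiv {n : ℕ} (c d : (Fin n →₀ ℕ) × ℚ) : Prop :=
  (∃ k, d.1 = c.1 + k) ∧ c.2 ≤ d.2

/-- The skeleton of `LT(J)` modulo units of `K°`. -/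
def SkelClass (val : K → WithTop ℤ) (r : Fin n → ℚ) (mo : (Fin n →₀ ℕ) → (Fin n →₀ ℕ) → Prop)
    (J : Set (MvPowerSeries (Fin n) K)) : Set ((Fin n →₀ ℕ) × ℚ) :=
  {c | c ∈ LTClassSet val r mo J ∧ ∀ d ∈ LTClassSet val r mo J, ClassDiv d c → d = c}

/-- Minimal Gröbner basis of an ideal of `K{X;r}`: the classes of the leading terms
modulo units of `K` are pairwise distinct and are exactly the skeleton of `LT(J)`. -/
def IsMinGB (val : K → WithTop ℤ) (r : Fin n → ℚ) (mo : (Fin n →₀ ℕ) → (Fin n →₀ ℕ) → Prop)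
    (J : Set (MvPowerSeries (Fin n) K)) {s : ℕ} (g : Fin s → MvPowerSeries (Fin n) K) : Prop :=
  IsGB val r mo J g ∧ ∃ e : Fin s → (Fin n →₀ ℕ),
    (∀ k, ∃ a, IsLeadingTerm val r mo (g k) a (e k)) ∧
    Function.Injective e ∧ Set.range e = SkelExp val r mo J

/-- Minimal Gröbner basis of an ideal of `K{X;r}°`. -/
def IsMinGBInt (val : K → WithTop ℤ) (r : Fin n → ℚ) (mo : (Fin n →₀ ℕ) → (Fin n →₀ ℕ) → Prop)
    (J : Set (MvPowerSeries (Fin n) K)) {s : ℕ} (g : Fin s → MvPowerSeries (Fin n) K) : Prop :=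
  IsGBInt val r mo J g ∧ ∃ e : Fin s → ((Fin n →₀ ℕ) × ℚ),
    (∀ k, ∃ a, IsLeadingTerm val r mo (g k) a (e k).1 ∧
      tval val r a (e k).1 = ((e k).2 : WithTop ℚ)) ∧
    Function.Injective e ∧ Set.range e = SkelClass val r mo J

/-- The leading term of `f` (via choice). -/
def leadTerm (val : K → WithTop ℤ) (r : Fin n → ℚ) (mo : (Fin n →₀ ℕ) → (Fin n →₀ ℕ) → Prop)
    (f : MvPowerSeries (Fin n) K) : K × (Fin n →₀ ℕ) :=
  Classical.epsilon fun p => IsLeadingTerm val r mo f p.1 p.2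

/-- Multiplication of a power series by the term `t`. -/
def termMul (t : K × (Fin n →₀ ℕ)) (f : MvPowerSeries (Fin n) K) : MvPowerSeries (Fin n) K :=
  (MvPowerSeries.monomial (R := K) t.2 t.1) * f

/-- The S-polynomial `S(f, g) = (LT(g)/gcd(LT f, LT g))·f - (LT(f)/gcd(LT f, LT g))·g`. -/
def Spoly (val : K → WithTop ℤ) (π : K) (r : Fin n → ℚ)
    (mo : (Fin n →₀ ℕ) → (Fin n →₀ ℕ) → Prop)
    (f g : MvPowerSeries (Fin n) K) : MvPowerSeries (Fin n) K :=
  let a := (leadTerm val r mo f).1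
  let i := (leadTerm val r mo f).2
  let b := (leadTerm val r mo g).1
  let j := (leadTerm val r mo g).2
  let m : ℤ := min ((val a).untopD 0) ((val b).untopD 0)
  termMul (b * π ^ (-m), j - i) f - termMul (a * π ^ (-m), i - j) g

/-- `f` reduces to zero modulo the family `g` with quotients in `A`. -/
def ReducesToZero (val : K → WithTop ℤ) (r : Fin n → ℚ)
    (mo : (Fin n →₀ ℕ) → (Fin n →₀ ℕ) → Prop) (A : Set (MvPowerSeries (Fin n) K))
    {s : ℕ} (g : Fin s → MvPowerSeries (Fin n) K) (f : MvPowerSeries (Fin n) K) : Prop :=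
  f = 0 ∨ ∃ q : Fin s → MvPowerSeries (Fin n) K, (∀ k, q k ∈ A) ∧ f = ∑ k, q k * g k ∧
    ∀ k i, MvPowerSeries.coeff (R := K) i (q k) ≠ 0 →
      ∀ b j, IsLeadingTerm val r mo (g k) b j →
      ∀ a₀ i₀, IsLeadingTerm val r mo f a₀ i₀ →
        TermLe val r mo (MvPowerSeries.coeff (R := K) i (q k) * b) (i + j) a₀ i₀


-- Auxiliary lemmas

theorem aux_exists_dominating {α : Type*} [Preorder α] {S : Set α} (h : S.IsPWO) :
    ∃ F : Finset α, ↑F ⊆ S ∧ ∀ x ∈ S, ∃ y ∈ F, y ≤ x := by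
  by_contra hcon
  push_neg at hcon
  classical
  have key : ∀ F : Finset α, ∃ x, x ∈ S ∧ ∀ y ∈ F, y ∈ S → ¬ y ≤ x := by
    intro F
    obtain ⟨x, hxS, hx⟩ := hcon (F.filter (· ∈ S))
      (by intro y hy; simpa using (Finset.mem_filter.mp hy).2)
    exact ⟨x, hxS, fun y hy hyS => hx y (Finset.mem_filter.mpr ⟨hy, hyS⟩)⟩
  let pick : Finset α → α := fun F => Classical.choose (key F)
  have pick_mem : ∀ F, pick F ∈ S := fun F => (Classical.choose_spec (key F)).1
  have pick_not : ∀ F, ∀ y ∈ F, y ∈ S → ¬ y ≤ pick F :=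
    fun F => (Classical.choose_spec (key F)).2
  let prev : ℕ → Finset α := fun k => Nat.rec ∅ (fun _ P => insert (pick P) P) k
  have prev_succ : ∀ k, prev (k + 1) = insert (pick (prev k)) (prev k) := fun k => rfl
  let f : ℕ → α := fun k => pick (prev k)
  have hf : ∀ k, f k ∈ S := fun k => pick_mem _
  have hmem : ∀ m n, m < n → f m ∈ prev n := by
    intro m n hlt
    induction n with
    | zero => omega
    | succ n ih =>
      rw [prev_succ, Finset.mem_insert]
      rcases Nat.lt_succ_iff_lt_or_eq.mp hlt with h' | h'
      · exact Or.inr (ih h')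
      · exact Or.inl (by rw [h'])
  obtain ⟨m, n, hmn, hle⟩ := h.exists_lt hf
  exact pick_not (prev n) (f m) (hmem m n hmn) (hf m) hle

theorem aux_wt_add (r : Fin n → ℚ) (x y : Fin n →₀ ℕ) : wt r (x + y) = wt r x + wt r y := by
  simp only [wt, Finsupp.add_apply, ← Finset.sum_add_distrib]
  congr 1; ext j; push_cast; ring

theorem aux_tval_eq {val : K → WithTop ℤ} (hval : ∀ x : K, val x = ⊤ ↔ x = 0) {a : K}
    (ha : a ≠ 0) (r : Fin n → ℚ) (i : Fin n →₀ ℕ) :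
    ∃ z : ℤ, val a = (z : WithTop ℤ) ∧
      tval val r a i = (((z : ℚ) - wt r i : ℚ) : WithTop ℚ) := by
  have h : val a ≠ ⊤ := fun h => ha ((hval a).mp h)
  obtain ⟨z, hz⟩ := WithTop.ne_top_iff_exists.mp h
  refine ⟨z, hz.symm, ?_⟩
  rw [tval, valQ, ← hz, WithTop.map_coe]
  norm_cast
  ring

theorem aux_Dmul (r : Fin n → ℚ) (i : Fin n →₀ ℕ) :
    ∃ z : ℤ, (z : ℚ) = ((∏ j, (r j).den : ℕ) : ℚ) * wt r i := by
  have h : ∀ j : Fin n, ∃ z : ℤ, (z : ℚ) = ((∏ j, (r j).den : ℕ) : ℚ) * r j := by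
    intro j
    refine ⟨((∏ j, (r j).den) / (r j).den : ℕ) * (r j).num, ?_⟩
    have hd : (r j).den ∣ ∏ j, (r j).den := Finset.dvd_prod_of_mem _ (Finset.mem_univ j)
    have hden : ((r j).den : ℚ) ≠ 0 := by exact_mod_cast (r j).den_nz
    rw [Int.cast_mul, Int.cast_natCast, Nat.cast_div hd hden,
      div_mul_eq_mul_div, mul_div_assoc, Rat.num_div_den]
  choose z hz using h
  refine ⟨∑ j, z j * (i j : ℤ), ?_⟩
  rw [wt, Finset.mul_sum]
  push_cast
  congr 1; ext j; rw [hz j]; push_cast; ring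

/-- every ideal of `K{X;r}` and every ideal of `K{X;r}°` admits a
finite Gröbner basis. -/
theorem statement8 (val : K → WithTop ℤ) (hval : IsCDVField val) (r : Fin n → ℚ)
    (mo : (Fin n →₀ ℕ) → (Fin n →₀ ℕ) → Prop) (hmo : IsMonomialOrder mo) :
    (∀ J : Set (MvPowerSeries (Fin n) K), IsIdealOf (TateSet val r) J →
      ∃ (s : ℕ) (g : Fin s → MvPowerSeries (Fin n) K), IsGB val r mo J g) ∧
    (∀ J : Set (MvPowerSeries (Fin n) K), IsIdealOf (TateIntSet val r) J →
      ∃ (s : ℕ) (g : Fin s → MvPowerSeries (Fin n) K), IsGBInt val r mo J g) := by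
  constructor
  · -- rational case
    intro J hJ
    classical
    have hE : (LTExpSet val r mo J).IsPWO := Set.isPWO_of_wellQuasiOrderedLE _
    obtain ⟨F, hFsub, hFdom⟩ := aux_exists_dominating hE
    have hch : ∀ y : F, ∃ f, f ∈ J ∧ ∃ a, IsLeadingTerm val r mo f a (y : Fin n →₀ ℕ) := by
      rintro ⟨y, hy⟩
      obtain ⟨a, f, hfJ, hLT⟩ := hFsub hy
      exact ⟨f, hfJ, a, hLT⟩
    choose gf hgfJ ga hga using hch
    refine ⟨F.card, fun k => gf (F.equivFin.symm k), ?_, ?_⟩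
    · intro k
      refine ⟨hgfJ _, ?_⟩
      intro h0
      have h0' : gf (F.equivFin.symm k) = 0 := h0
      have := (hga (F.equivFin.symm k)).1
      rw [h0', map_zero] at this
      exact (hga (F.equivFin.symm k)).2.1 this.symm
    · intro f hf a i hLT
      obtain ⟨y, hyF, hyle⟩ := hFdom i ⟨a, f, hf, hLT⟩
      refine ⟨F.equivFin ⟨y, hyF⟩, ga _, _, by simpa using hga (F.equivFin.symm (F.equivFin ⟨y, hyF⟩)), ?_⟩
      obtain ⟨k, hk⟩ := le_iff_exists_add.mp hyle
      refine ⟨(hga _).2.1, hLT.2.1, k, ?_⟩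
      simpa using hk
  · -- integral case
    intro J hJ
    classical
    set D : ℕ := ∏ j, (r j).den with hD
    have hD0 : (0 : ℚ) < (D : ℚ) := by
      have : D ≠ 0 := Finset.prod_ne_zero_iff.mpr fun j _ => (r j).den_nz
      positivity
    set C : Set ((Fin n →₀ ℕ) × ℚ) := LTClassSet val r mo J with hC
    -- every class has nonnegative value, with D * value an integer
    have hclass : ∀ c ∈ C, ∃ m : ℕ, (m : ℚ) = (D : ℚ) * c.2 := by
      rintro ⟨i, v⟩ ⟨a, ⟨f, hfJ, hLT⟩, htv⟩
      obtain ⟨z, hz, htv'⟩ := aux_tval_eq hval.eq_top_iff hLT.2.1 r i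
      have hv : v = (z : ℚ) - wt r i := by
        have := htv.symm.trans htv'
        exact_mod_cast this
      have hv0 : (0 : ℚ) ≤ v := by
        have h0 : (0 : WithTop ℚ) ≤ cval val r f (i, v).1 := (hJ.subset hfJ).2 _
        rw [cval, hLT.1, htv] at h0
        exact_mod_cast h0
      obtain ⟨w, hw⟩ := aux_Dmul r i
      rw [← hD] at hw
      refine ⟨((D : ℤ) * z - w).toNat, ?_⟩
      have hDv : (((D : ℤ) * z - w : ℤ) : ℚ) = (D : ℚ) * v := by
        rw [hv]; push_cast [hw]; ring
      have hnn : (0 : ℤ) ≤ (D : ℤ) * z - w := by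
        have : (0 : ℚ) ≤ (((D : ℤ) * z - w : ℤ) : ℚ) := by rw [hDv]; positivity
        exact_mod_cast this
      have : ((((D : ℤ) * z - w).toNat : ℤ) : ℚ) = (D : ℚ) * v := by
        rw [Int.toNat_of_nonneg hnn]; exact hDv
      exact_mod_cast this
    set S : Set ((Fin n →₀ ℕ) × ℕ) :=
      {p | (p.1, (p.2 : ℚ) / (D : ℚ)) ∈ C} with hSdef
    have hSPWO : S.IsPWO := by
      have h1 : (Set.univ : Set (Fin n →₀ ℕ)).IsPWO := Set.isPWO_of_wellQuasiOrderedLE _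
      have h2 : (Set.univ : Set ℕ).IsPWO :=
        (Set.isWF_univ_iff.mpr ⟨wellFounded_lt⟩).isPWO
      have := h1.prod h2
      rw [Set.univ_prod_univ] at this
      exact this.mono (Set.subset_univ _)
    obtain ⟨F, hFsub, hFdom⟩ := aux_exists_dominating hSPWO
    have hch : ∀ p : F, ∃ f, f ∈ J ∧ ∃ a, IsLeadingTerm val r mo f a (p : (Fin n →₀ ℕ) × ℕ).1 ∧
        tval val r a (p : (Fin n →₀ ℕ) × ℕ).1 =
          ((((p : (Fin n →₀ ℕ) × ℕ).2 : ℚ) / (D : ℚ) : ℚ) : WithTop ℚ) := by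
      rintro ⟨p, hp⟩
      obtain ⟨a, ⟨f, hfJ, hLT⟩, htv⟩ := hFsub hp
      exact ⟨f, hfJ, a, hLT, htv⟩
    choose gf hgfJ ga hgaLT hgaV using hch
    refine ⟨F.card, fun k => gf (F.equivFin.symm k), ?_, ?_⟩
    · intro k
      refine ⟨hgfJ _, ?_⟩
      intro h0
      have h0' : gf (F.equivFin.symm k) = 0 := h0
      have := (hgaLT (F.equivFin.symm k)).1
      rw [h0', map_zero] at this
      exact (hgaLT (F.equivFin.symm k)).2.1 this.symm
    · intro f hf a i hLT
      have ha : a ≠ 0 := hLT.2.1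
      obtain ⟨z, hz, htv⟩ := aux_tval_eq hval.eq_top_iff ha r i
      set v : ℚ := (z : ℚ) - wt r i with hvdef
      have hiC : ((i, v) : (Fin n →₀ ℕ) × ℚ) ∈ C := ⟨a, ⟨f, hf, hLT⟩, htv⟩
      obtain ⟨m, hm⟩ := hclass _ hiC
      have hmv : (m : ℚ) / (D : ℚ) = v := by field_simp [hm]; exact hm
      have hiS : ((i, m) : (Fin n →₀ ℕ) × ℕ) ∈ S := by
        show ((i, (m : ℚ) / (D : ℚ)) : (Fin n →₀ ℕ) × ℚ) ∈ C
        rw [hmv]; exact hiC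
      obtain ⟨p, hpF, hple⟩ := hFdom (i, m) hiS
      have hp1 : p.1 ≤ i := hple.1
      have hp2 : p.2 ≤ m := hple.2
      obtain ⟨k', hk'⟩ := le_iff_exists_add.mp hp1
      set pp : F := ⟨p, hpF⟩
      refine ⟨F.equivFin pp, ga (F.equivFin.symm (F.equivFin pp)), p.1, by simpa using hgaLT pp, ?_⟩
      have hsimp : F.equivFin.symm (F.equivFin pp) = pp := Equiv.symm_apply_apply _ _
      rw [hsimp]
      have hb : ga pp ≠ 0 := (hgaLT pp).2.1
      refine ⟨hb, ha, k', hk', ?_⟩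
      -- valuation computation
      obtain ⟨zb, hzb, htvb⟩ := aux_tval_eq hval.eq_top_iff hb r p.1
      have hw : (p.2 : ℚ) / (D : ℚ) = (zb : ℚ) - wt r p.1 := by
        have := (hgaV pp).symm.trans htvb
        exact_mod_cast this
      have hbinv : (ga pp)⁻¹ ≠ 0 := inv_ne_zero hb
      obtain ⟨zbi, hzbi⟩ := WithTop.ne_top_iff_exists.mp
        (fun h => hbinv ((hval.eq_top_iff _).mp h))
      have hsum : zb + zbi = 0 := by
        have h1 := hval.map_mul (ga pp) (ga pp)⁻¹
        rw [mul_inv_cancel₀ hb, hval.map_one, hzb, ← hzbi] at h1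
        exact_mod_cast h1.symm
      have hvab : val (a * (ga pp)⁻¹) = ((z - zb : ℤ) : WithTop ℤ) := by
        rw [hval.map_mul, hz, ← hzbi]
        rw [show z - zb = z + zbi by omega]
        exact_mod_cast rfl
      have htv2 : tval val r (a * (ga pp)⁻¹) k' =
          ((((z : ℚ) - (zb : ℚ)) - wt r k' : ℚ) : WithTop ℚ) := by
        rw [tval, valQ, hvab, WithTop.map_coe, ← WithTop.coe_add]
        congr 1
        push_cast
        ring
      rw [htv2]
      have hwti : wt r i = wt r p.1 + wt r k' := by rw [hk', aux_wt_add]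
      have hpm : (p.2 : ℚ) ≤ (m : ℚ) := by exact_mod_cast hp2
      have hdd : (p.2 : ℚ) / (D : ℚ) ≤ (m : ℚ) / (D : ℚ) := by gcongr
      rw [hmv] at hdd
      have : (0 : ℚ) ≤ ((z : ℚ) - (zb : ℚ)) - wt r k' := by
        rw [hw] at hdd
        rw [hvdef, hwti] at hdd
        linarith
      exact_mod_cast this
end
end

section
/- Take r = (0,…,0). Let I be an ideal of K{X}° and N a positive integer, and set I_N = I + π^N K{X}°. Then LT(I_N) is the ideal of the monoid T° generated by LT(I) together with the term π^N; consequently, if H is a Gröbner basis of I, then H ∪ {π^N} is a Gröbner basis of I_N. -/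
open MvPowerSeries

noncomputable section

variable {K : Type*} [Field K] {n : ℕ}

section Aux19

variable {K : Type*} [Field K] {n : ℕ}

lemma aux_mapQ_le {a b : WithTop ℤ} (h : a ≤ b) :
    WithTop.map (fun m : ℤ => (m : ℚ)) a ≤ WithTop.map (fun m : ℤ => (m : ℚ)) b := by
  cases a with
  | top => rw [top_le_iff.mp h]
  | coe p =>
    cases b with
    | top => exact le_top
    | coe q =>
      rw [WithTop.map_coe, WithTop.map_coe, WithTop.coe_le_coe]
      exact_mod_cast WithTop.coe_le_coe.mp h

lemma aux_valQ_eq_top (val : K → WithTop ℤ) (hval : IsCDVField val) (a : K) :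
    valQ val a = ⊤ ↔ a = 0 := by
  rw [← hval.eq_top_iff a]
  unfold valQ
  cases val a with
  | top => simp
  | coe q => simp [WithTop.map_coe]

lemma aux_valQ_ne_top (val : K → WithTop ℤ) (hval : IsCDVField val) {a : K} (ha : a ≠ 0) :
    valQ val a ≠ ⊤ := fun h => ha ((aux_valQ_eq_top val hval a).mp h)

lemma aux_exists_valQ (val : K → WithTop ℤ) (hval : IsCDVField val) {a : K} (ha : a ≠ 0) :
    ∃ q : ℚ, valQ val a = (q : WithTop ℚ) := by
  cases h : valQ val a with
  | top => exact absurd h (aux_valQ_ne_top val hval ha)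
  | coe q => exact ⟨q, rfl⟩

lemma aux_valQ_mul (val : K → WithTop ℤ) (hval : IsCDVField val) (x y : K) :
    valQ val (x * y) = valQ val x + valQ val y := by
  unfold valQ
  rw [hval.map_mul x y]
  cases val x with
  | top => simp
  | coe p =>
    cases val y with
    | top => simp
    | coe q =>
      rw [← WithTop.coe_add, WithTop.map_coe, WithTop.map_coe, WithTop.map_coe,
        ← WithTop.coe_add]
      push_cast
      rfl

lemma aux_valQ_one (val : K → WithTop ℤ) (hval : IsCDVField val) :
    valQ val (1 : K) = 0 := by
  unfold valQ
  rw [hval.map_one]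
  rfl

lemma aux_valQ_negone (val : K → WithTop ℤ) (hval : IsCDVField val) :
    valQ val (-1 : K) = 0 := by
  have h : valQ val ((-1 : K) * (-1 : K)) = valQ val (-1 : K) + valQ val (-1 : K) :=
    aux_valQ_mul val hval _ _
  rw [neg_mul_neg, one_mul, aux_valQ_one val hval] at h
  cases hc : valQ val (-1 : K) with
  | top => rw [hc] at h; simp at h
  | coe q =>
    rw [hc, ← WithTop.coe_add] at h
    have hq : q + q = 0 := by exact_mod_cast h.symm
    have : q = 0 := by linarith
    rw [this]
    rfl

lemma aux_valQ_neg (val : K → WithTop ℤ) (hval : IsCDVField val) (x : K) :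
    valQ val (-x) = valQ val x := by
  have : (-x : K) = (-1) * x := by ring
  rw [this, aux_valQ_mul val hval, aux_valQ_negone val hval, zero_add]

lemma aux_min_le_valQ_add (val : K → WithTop ℤ) (hval : IsCDVField val) (x y : K) :
    min (valQ val x) (valQ val y) ≤ valQ val (x + y) := by
  rcases min_le_iff.mp (hval.min_le_val_add x y) with h | h
  · exact min_le_of_left_le (aux_mapQ_le h)
  · exact min_le_of_right_le (aux_mapQ_le h)

lemma aux_valQ_add_eq_left (val : K → WithTop ℤ) (hval : IsCDVField val) {x y : K}
    (h : valQ val x < valQ val y) : valQ val (x + y) = valQ val x := by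
  have h1 : valQ val x ≤ valQ val (x + y) := by
    have := aux_min_le_valQ_add val hval x y
    rwa [min_eq_left h.le] at this
  have h2 : valQ val (x + y) ≤ valQ val x := by
    have h3 := aux_min_le_valQ_add val hval (x + y) (-y)
    rw [aux_valQ_neg val hval, add_neg_cancel_right] at h3
    rcases min_le_iff.mp h3 with h4 | h4
    · exact h4
    · exact absurd h4 (not_le.mpr h)
  exact le_antisymm h2 h1

lemma aux_valQ_inv (val : K → WithTop ℤ) (hval : IsCDVField val) {a : K} (ha : a ≠ 0)
    {q : ℚ} (h : valQ val a = (q : WithTop ℚ)) :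
    valQ val a⁻¹ = ((-q : ℚ) : WithTop ℚ) := by
  have hmul : valQ val (a * a⁻¹) = valQ val a + valQ val a⁻¹ := aux_valQ_mul val hval _ _
  rw [mul_inv_cancel₀ ha, aux_valQ_one val hval, h] at hmul
  cases hc : valQ val a⁻¹ with
  | top => rw [hc] at hmul; simp at hmul
  | coe p =>
    rw [hc, ← WithTop.coe_add] at hmul
    have hp : q + p = 0 := by exact_mod_cast hmul.symm
    have : p = -q := by linarith
    exact_mod_cast this

lemma aux_valQ_pow (val : K → WithTop ℤ) (hval : IsCDVField val) {π : K}
    (hπ : val π = (1 : ℤ)) (N : ℕ) :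
    valQ val (π ^ N) = ((N : ℚ) : WithTop ℚ) := by
  induction N with
  | zero => simpa using aux_valQ_one val hval
  | succ m ih =>
    rw [pow_succ, aux_valQ_mul val hval, ih]
    have hπQ : valQ val π = ((1 : ℚ) : WithTop ℚ) := by
      unfold valQ; rw [hπ, WithTop.map_coe]; norm_num
    rw [hπQ, ← WithTop.coe_add]
    push_cast
    rfl

lemma aux_wt_zero (i : Fin n →₀ ℕ) : wt (0 : Fin n → ℚ) i = 0 := by
  simp [wt]

lemma aux_tval_zero (val : K → WithTop ℤ) (a : K) (i : Fin n →₀ ℕ) :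
    tval val (0 : Fin n → ℚ) a i = valQ val a := by
  rw [tval, aux_wt_zero, neg_zero]
  show valQ val a + ((0 : ℚ) : WithTop ℚ) = valQ val a
  rw [WithTop.coe_zero, add_zero]

lemma aux_cval_zero (val : K → WithTop ℤ) (f : MvPowerSeries (Fin n) K) (i : Fin n →₀ ℕ) :
    cval val (0 : Fin n → ℚ) f i = valQ val (MvPowerSeries.coeff (R := K) i f) :=
  aux_tval_zero val _ i

lemma aux_zero_mem_tateInt (val : K → WithTop ℤ) (hval : IsCDVField val) :
    (0 : MvPowerSeries (Fin n) K) ∈ TateIntSet val (0 : Fin n → ℚ) := by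
  have hcv : ∀ i : Fin n →₀ ℕ, cval val (0 : Fin n → ℚ) (0 : MvPowerSeries (Fin n) K) i = ⊤ := by
    intro i
    rw [aux_cval_zero, map_zero]
    exact (aux_valQ_eq_top val hval 0).mpr rfl
  constructor
  · intro C
    have : {i : Fin n →₀ ℕ |
        cval val (0 : Fin n → ℚ) (0 : MvPowerSeries (Fin n) K) i < (C : WithTop ℚ)} = ∅ := by
      ext i
      simp only [Set.mem_setOf_eq, Set.mem_empty_iff_false, iff_false, not_lt, hcv i, le_top]
    rw [this]; exact Set.finite_empty
  · intro i; rw [hcv i]; exact le_top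

lemma aux_monomial_mem_tateInt (val : K → WithTop ℤ) (hval : IsCDVField val)
    {c : K} (hc : (0 : WithTop ℚ) ≤ valQ val c) (k : Fin n →₀ ℕ) :
    (MvPowerSeries.monomial (R := K) k c : MvPowerSeries (Fin n) K)
      ∈ TateIntSet val (0 : Fin n → ℚ) := by
  classical
  have hcv : ∀ i : Fin n →₀ ℕ,
      cval val (0 : Fin n → ℚ) (MvPowerSeries.monomial (R := K) k c) i
        = if i = k then valQ val c else ⊤ := by
    intro i
    rw [aux_cval_zero, MvPowerSeries.coeff_monomial]
    split
    · rfl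
    · rw [(aux_valQ_eq_top val hval 0).mpr rfl]
  constructor
  · intro C
    apply Set.Finite.subset (Set.finite_singleton k)
    intro i hi
    simp only [Set.mem_setOf_eq, hcv i] at hi
    by_contra hik
    have hik' : i ≠ k := fun h => hik (by simp [h])
    rw [if_neg hik'] at hi
    exact absurd hi (by simp)
  · intro i
    rw [hcv i]
    split
    · exact hc
    · exact le_top

lemma aux_one_mem_tateInt (val : K → WithTop ℤ) (hval : IsCDVField val) :
    (1 : MvPowerSeries (Fin n) K) ∈ TateIntSet val (0 : Fin n → ℚ) := by
  rw [← MvPowerSeries.monomial_zero_one]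
  exact aux_monomial_mem_tateInt val hval (le_of_eq (aux_valQ_one val hval).symm) 0

lemma aux_tintdiv_trans (val : K → WithTop ℤ) (hval : IsCDVField val)
    {b c a : K} {j l i : Fin n →₀ ℕ}
    (h1 : TIntDiv val (0 : Fin n → ℚ) b j c l) (h2 : TIntDiv val (0 : Fin n → ℚ) c l a i) :
    TIntDiv val (0 : Fin n → ℚ) b j a i := by
  obtain ⟨hb, hcne, k1, hk1, hv1⟩ := h1
  obtain ⟨_, ha, k2, hk2, hv2⟩ := h2
  rw [aux_tval_zero] at hv1 hv2
  refine ⟨hb, ha, k1 + k2, by rw [hk2, hk1, add_assoc], ?_⟩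
  rw [aux_tval_zero]
  have heq : a * b⁻¹ = (c * b⁻¹) * (a * c⁻¹) := by
    field_simp
  rw [heq, aux_valQ_mul val hval]
  exact add_nonneg hv1 hv2

lemma aux_islt_C (val : K → WithTop ℤ) (mo : (Fin n →₀ ℕ) → (Fin n →₀ ℕ) → Prop)
    {c : K} (hc : c ≠ 0) :
    IsLeadingTerm val (0 : Fin n → ℚ) mo (MvPowerSeries.C (σ := Fin n) (R := K) c) c 0 := by
  classical
  refine ⟨MvPowerSeries.coeff_zero_C c, hc, ?_⟩
  intro j hj hj0
  exfalso
  apply hj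
  rw [MvPowerSeries.coeff_C]
  exact if_neg hj0

end Aux19

/-- (r = 0) for an ideal `I` of `K{X}°` and `I_N = I + π^N·K{X}°`,
the set `LT(I_N)` is the ideal of the monoid `T°` generated by `LT(I)` and `π^N`;
consequently, if `H` is a Gröbner basis of `I`, then `H ∪ {π^N}` is a Gröbner basis
of `I_N`. -/
theorem statement19 (val : K → WithTop ℤ) (hval : IsCDVField val)
    (π : K) (hπ : val π = (1 : ℤ))
    (mo : (Fin n →₀ ℕ) → (Fin n →₀ ℕ) → Prop) (hmo : IsMonomialOrder mo)
    (I : Set (MvPowerSeries (Fin n) K))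
    (hI : IsIdealOf (TateIntSet val (0 : Fin n → ℚ)) I) (N : ℕ) (hN : 0 < N) :
    (LTSet val (0 : Fin n → ℚ) mo
        {f | ∃ g ∈ I, ∃ h ∈ TateIntSet val (0 : Fin n → ℚ),
          f = g + (MvPowerSeries.C (σ := Fin n) (R := K) (π ^ N)) * h}
      = {u | ∃ t₀ : K × (Fin n →₀ ℕ),
          (t₀ ∈ LTSet val (0 : Fin n → ℚ) mo I ∨ t₀ = (π ^ N, 0)) ∧
          TIntDiv val (0 : Fin n → ℚ) t₀.1 t₀.2 u.1 u.2}) ∧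
    (∀ (s : ℕ) (g : Fin s → MvPowerSeries (Fin n) K),
      IsGBInt val (0 : Fin n → ℚ) mo I g →
      IsGBInt val (0 : Fin n → ℚ) mo
        {f | ∃ g' ∈ I, ∃ h ∈ TateIntSet val (0 : Fin n → ℚ),
          f = g' + (MvPowerSeries.C (σ := Fin n) (R := K) (π ^ N)) * h}
        (Fin.snoc g (MvPowerSeries.C (σ := Fin n) (R := K) (π ^ N)))) := by
  classical
  have hπ0 : π ≠ 0 := by
    intro h
    rw [(hval.eq_top_iff π).mpr h] at hπ
    exact WithTop.top_ne_coe hπ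
  have hπN : π ^ N ≠ 0 := pow_ne_zero _ hπ0
  have hvπN : valQ val (π ^ N) = ((N : ℚ) : WithTop ℚ) := aux_valQ_pow val hval hπ N
  set IN : Set (MvPowerSeries (Fin n) K) :=
    {f | ∃ g ∈ I, ∃ h ∈ TateIntSet val (0 : Fin n → ℚ),
      f = g + (MvPowerSeries.C (σ := Fin n) (R := K) (π ^ N)) * h} with hINdef
  have h1 : LTSet val (0 : Fin n → ℚ) mo IN = {u : K × (Fin n →₀ ℕ) |
      ∃ t₀ : K × (Fin n →₀ ℕ),
      (t₀ ∈ LTSet val (0 : Fin n → ℚ) mo I ∨ t₀ = (π ^ N, 0)) ∧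
      TIntDiv val (0 : Fin n → ℚ) t₀.1 t₀.2 u.1 u.2} := by
    ext u
    constructor
    · rintro ⟨f, ⟨g, hg, h, hh, rfl⟩, hlt⟩
      set F := g + MvPowerSeries.C (σ := Fin n) (R := K) (π ^ N) * h with hFdef
      obtain ⟨hcoef, hane, hmax⟩ := hlt
      have hPle : ∀ j : Fin n →₀ ℕ,
          ((N : ℚ) : WithTop ℚ) ≤ valQ val (π ^ N * MvPowerSeries.coeff (R := K) j h) := by
        intro j
        rw [aux_valQ_mul val hval, hvπN]
        have h0 : (0 : WithTop ℚ) ≤ valQ val (MvPowerSeries.coeff (R := K) j h) := by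
          have := hh.2 j; rwa [aux_cval_zero] at this
        exact le_add_of_nonneg_right h0
      have hcf : ∀ j : Fin n →₀ ℕ, MvPowerSeries.coeff (R := K) j F
          = MvPowerSeries.coeff (R := K) j g + π ^ N * MvPowerSeries.coeff (R := K) j h := by
        intro j; rw [hFdef, map_add, MvPowerSeries.coeff_C_mul]
      by_cases hcase : ((N : ℚ) : WithTop ℚ) ≤ valQ val u.1
      · refine ⟨(π ^ N, 0), Or.inr rfl, hπN, hane, u.2, (zero_add u.2).symm, ?_⟩
        rw [aux_tval_zero]
        obtain ⟨q, hq⟩ := aux_exists_valQ val hval hane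
        rw [aux_valQ_mul val hval, hq, aux_valQ_inv val hval hπN hvπN, ← WithTop.coe_add]
        have hNq : (N : ℚ) ≤ q := by rw [hq] at hcase; exact_mod_cast hcase
        rw [← WithTop.coe_zero, WithTop.coe_le_coe]
        linarith
      · push_neg at hcase
        set b := MvPowerSeries.coeff (R := K) u.2 g with hbdef
        have hPi := hPle u.2
        have hsplit : u.1 = b + π ^ N * MvPowerSeries.coeff (R := K) u.2 h := by
          rw [← hcoef, hcf]
        have hbval : valQ val b = valQ val u.1 := by
          have hb2 : b = u.1 + -(π ^ N * MvPowerSeries.coeff (R := K) u.2 h) := by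
            rw [hsplit]; ring
          rw [hb2, aux_valQ_add_eq_left val hval]
          rw [aux_valQ_neg val hval]
          exact lt_of_lt_of_le hcase hPi
        have hbne : b ≠ 0 := by
          intro h0
          apply aux_valQ_ne_top val hval hane
          rw [← hbval, h0]
          exact (aux_valQ_eq_top val hval 0).mpr rfl
        have hltg : IsLeadingTerm val (0 : Fin n → ℚ) mo g b u.2 := by
          refine ⟨rfl, hbne, ?_⟩
          intro j hj hji
          have hcgj : MvPowerSeries.coeff (R := K) j g
              = MvPowerSeries.coeff (R := K) j F + -(π ^ N * MvPowerSeries.coeff (R := K) j h) := by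
            rw [hcf]; ring
          have hPj : valQ val u.1 < valQ val (-(π ^ N * MvPowerSeries.coeff (R := K) j h)) := by
            rw [aux_valQ_neg val hval]; exact lt_of_lt_of_le hcase (hPle j)
          by_cases hfj : MvPowerSeries.coeff (R := K) j F = 0
          · refine Or.inl ?_
            rw [aux_tval_zero, aux_tval_zero, hbval, hcgj, hfj, zero_add]
            exact hPj
          · rcases hmax j hfj hji with hl | ⟨heq, _, hmo'⟩
            · refine Or.inl ?_
              rw [aux_tval_zero, aux_tval_zero] at hl
              rw [aux_tval_zero, aux_tval_zero, hbval]
              have hmin := aux_min_le_valQ_add val hval (MvPowerSeries.coeff (R := K) j F)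
                (-(π ^ N * MvPowerSeries.coeff (R := K) j h))
              rw [← hcgj] at hmin
              exact lt_of_lt_of_le (lt_min hl hPj) hmin
            · refine Or.inr ?_
              rw [aux_tval_zero, aux_tval_zero] at heq
              have hlt2 : valQ val (MvPowerSeries.coeff (R := K) j F)
                  < valQ val (-(π ^ N * MvPowerSeries.coeff (R := K) j h)) := by
                rw [heq]; exact hPj
              refine ⟨?_, hji, hmo'⟩
              rw [aux_tval_zero, aux_tval_zero, hbval, hcgj,
                aux_valQ_add_eq_left val hval hlt2, heq]
        refine ⟨(b, u.2), Or.inl ⟨g, hg, hltg⟩, hbne, hane, 0, (add_zero u.2).symm, ?_⟩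
        rw [aux_tval_zero]
        obtain ⟨q, hq⟩ := aux_exists_valQ val hval hane
        have hbq : valQ val b = (q : WithTop ℚ) := by rw [hbval, hq]
        rw [aux_valQ_mul val hval, hq, aux_valQ_inv val hval hbne hbq, ← WithTop.coe_add]
        rw [← WithTop.coe_zero, WithTop.coe_le_coe]
        linarith
    · rintro ⟨t₀, ht₀, htne, hune, k, hk, htv⟩
      rw [aux_tval_zero] at htv
      rcases ht₀ with ⟨f', hf', hltf'⟩ | rfl
      · obtain ⟨c, hcdef⟩ : ∃ c : K, c = u.1 * t₀.1⁻¹ := ⟨_, rfl⟩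
        rw [← hcdef] at htv
        have hcne : c ≠ 0 := by
          rw [hcdef]; exact mul_ne_zero hune (inv_ne_zero htne)
        have hmemI : MvPowerSeries.monomial (R := K) k c * f' ∈ I :=
          hI.smul_mem _ (aux_monomial_mem_tateInt val hval htv k) f' hf'
        have e1 : u.1 = c * t₀.1 := by
          rw [hcdef]; exact (inv_mul_cancel_right₀ htne u.1).symm
        refine ⟨MvPowerSeries.monomial (R := K) k c * f',
          ⟨MvPowerSeries.monomial (R := K) k c * f', hmemI, 0, aux_zero_mem_tateInt val hval,
            by rw [mul_zero, add_zero]⟩, ?_, hune, ?_⟩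
        · have h2 : u.2 = k + t₀.2 := by rw [hk, add_comm]
          rw [h2, MvPowerSeries.coeff_add_monomial_mul, hltf'.1, hcdef]
          exact inv_mul_cancel_right₀ htne u.1
        · intro m hm hmne
          rw [MvPowerSeries.coeff_monomial_mul] at hm ⊢
          by_cases hkm : k ≤ m
          swap
          · rw [if_neg hkm] at hm; exact absurd rfl hm
          rw [if_pos hkm] at hm ⊢
          have hm' : MvPowerSeries.coeff (R := K) (m - k) f' ≠ 0 := right_ne_zero_of_mul hm
          have hmk : m - k + k = m := tsub_add_cancel_of_le hkm
          have hmj : m - k ≠ t₀.2 := by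
            intro h0
            apply hmne
            rw [← hmk, h0, hk]
          rcases hltf'.2.2 (m - k) hm' hmj with hl | ⟨heq, _, hmo'⟩
          · refine Or.inl ?_
            rw [aux_tval_zero, aux_tval_zero] at hl ⊢
            rw [e1, aux_valQ_mul val hval c t₀.1,
              aux_valQ_mul val hval c (MvPowerSeries.coeff (R := K) (m - k) f')]
            exact WithTop.add_lt_add_left (aux_valQ_ne_top val hval hcne) hl
          · refine Or.inr ?_
            refine ⟨?_, hmne, ?_⟩
            · rw [aux_tval_zero, aux_tval_zero] at heq ⊢
              rw [e1, aux_valQ_mul val hval, aux_valQ_mul val hval, heq]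
            · have hmo2 := hmo.add_right (m - k) t₀.2 k hmo'
              rw [hmk] at hmo2
              rw [hk]
              exact hmo2
      · have hk' : u.2 = k := by simpa using hk
        have htv' : (0 : WithTop ℚ) ≤ valQ val (u.1 * (π ^ N)⁻¹) := htv
        refine ⟨MvPowerSeries.C (σ := Fin n) (R := K) (π ^ N)
            * MvPowerSeries.monomial (R := K) u.2 (u.1 * (π ^ N)⁻¹),
          ⟨0, hI.zero_mem, MvPowerSeries.monomial (R := K) u.2 (u.1 * (π ^ N)⁻¹),
            aux_monomial_mem_tateInt val hval htv' u.2, (zero_add _).symm⟩, ?_, hune, ?_⟩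
        · rw [MvPowerSeries.coeff_C_mul, MvPowerSeries.coeff_monomial, if_pos rfl,
            mul_comm]
          exact inv_mul_cancel_right₀ hπN u.1
        · intro m hm hmne
          exfalso
          apply hm
          rw [MvPowerSeries.coeff_C_mul, MvPowerSeries.coeff_monomial, if_neg hmne,
            mul_zero]
  have hCne : MvPowerSeries.C (σ := Fin n) (R := K) (π ^ N) ≠ 0 := by
    intro h0
    have := congrArg (MvPowerSeries.coeff (R := K) (0 : Fin n →₀ ℕ)) h0
    rw [MvPowerSeries.coeff_zero_C, map_zero] at this
    exact hπN this
  refine ⟨h1, ?_⟩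
  intro s g hgb
  constructor
  · intro k
    induction k using Fin.lastCases with
    | last =>
      rw [Fin.snoc_last]
      exact ⟨⟨0, hI.zero_mem, 1, aux_one_mem_tateInt val hval,
        by rw [zero_add, mul_one]⟩, hCne⟩
    | cast k0 =>
      rw [Fin.snoc_castSucc]
      exact ⟨⟨g k0, (hgb.1 k0).1, 0, aux_zero_mem_tateInt val hval,
        by rw [mul_zero, add_zero]⟩, (hgb.1 k0).2⟩
  · intro f hf a i hlt
    have hmem : ((a, i) : K × (Fin n →₀ ℕ)) ∈ LTSet val (0 : Fin n → ℚ) mo IN :=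
      ⟨f, hf, hlt⟩
    rw [h1] at hmem
    obtain ⟨t₀, ht₀, hdiv⟩ := hmem
    rcases ht₀ with ⟨f', hf', hltf'⟩ | rfl
    · obtain ⟨k, b, j, hgk, hdiv2⟩ := hgb.2 f' hf' t₀.1 t₀.2 hltf'
      refine ⟨k.castSucc, b, j, ?_, aux_tintdiv_trans val hval hdiv2 hdiv⟩
      rw [Fin.snoc_castSucc]
      exact hgk
    · refine ⟨Fin.last s, π ^ N, 0, ?_, hdiv⟩
      rw [Fin.snoc_last]
      exact aux_islt_C val mo hπN
end
end
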